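/- Refinement of the consistency characterization: Γ is friendly to φ if and only if Γ ⊢ ψ for every sentence ψ in the language L_Γ with φ ⊢ ψ. -/

import Mathlib

open FirstOrder Language

universe u v

/-- `Friendly ι Γ φ` : the theory `Γ` (in its own language `L₀ = L_Γ`, included in the
language `L = L_{Γ,φ}` via `ι`) is *friendly* to the sentence `φ` of `L`:
every model of `Γ` has an elementary extension which can be expanded to a model of `φ`. -/
def Friendly {L₀ L : FirstOrder.Language.{u, v}} (ι : L₀ →ᴸ L) (Γ : L₀.Theory)
    (φ : L.Sentence) : Prop :=
  ∀ (M : Type (max u v)) [L₀.Structure M] [Nonempty M],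
    M ⊨ Γ →
    ∃ (N : Type (max u v)) (S₀ : L₀.Structure N) (SL : L.Structure N),
      Nonempty (@ElementaryEmbedding L₀ M N _ S₀) ∧
      (@LHom.IsExpansionOn L₀ L ι N S₀ SL) ∧
      (@Sentence.Realize L N SL φ)

/-- Refinement: `Γ` is friendly to `φ` iff `Γ ⊢ ψ` for every sentence `ψ` of the
language `L_Γ` such that `φ ⊢ ψ`. -/
theorem friendly_iff_refinement {L₀ L : FirstOrder.Language.{u, v}} (ι : L₀ →ᴸ L)
    (hι : ι.Injective) (Γ : L₀.Theory) (φ : L.Sentence) :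
    Friendly ι Γ φ ↔
      ∀ ψ : L₀.Sentence, (({φ} : L.Theory) ⊨ᵇ ι.onSentence ψ) → Γ ⊨ᵇ ψ := by
  classical
  constructor
  · -- Forward direction
    intro hF ψ hψ
    rw [Theory.models_sentence_iff]
    intro MT
    obtain ⟨N, S₀, SL, hg, hexp, hφN⟩ := hF MT MT.is_model
    obtain ⟨g⟩ := hg
    letI := S₀
    letI := SL
    haveI := hexp
    haveI : Nonempty N := Nonempty.map g inferInstance
    haveI : N ⊨ ({φ} : L.Theory) :=
      ⟨fun χ hχ => by rw [Set.mem_singleton_iff] at hχ; rw [hχ]; exact hφN⟩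
    have h1 : N ⊨ ι.onSentence ψ := hψ.realize_sentence N
    have h2 : N ⊨ ψ := (LHom.realize_onSentence (M := N) ι ψ).1 h1
    exact (g.map_sentence ψ).2 h2
  · -- Backward direction
    intro h M _SM _neM hMΓ
    haveI : M ⊨ Γ := hMΓ
    set φ' : (L.withConstants M).Sentence := (L.lhomWithConstants M).onSentence φ with hφ'
    set T : (L.withConstants M).Theory :=
      (ι.addConstants M).onTheory (L₀.elementaryDiagram M) ∪ {φ'} with hT
    have hsat : T.IsSatisfiable := by
      rw [Theory.isSatisfiable_iff_isFinitelySatisfiable]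
      intro T₀ hT₀sub
      by_contra hT₀
      have h₁ : ↑(T₀.erase φ') ⊆
          (ι.addConstants M).onSentence '' (L₀.elementaryDiagram M) := by
        intro s hs
        rw [Finset.coe_erase, Set.mem_diff, Set.mem_singleton_iff] at hs
        rcases hT₀sub hs.1 with h' | h'
        · exact h'
        · exact absurd h' hs.2
      obtain ⟨D, hD, hDimg⟩ := Finset.subset_set_image_iff.1 h₁
      set χ₁ : L₀.Formula M := Formula.equivSentence.symm (BoundedFormula.iInf (fun θ : D => θ.1)) with hχ₁
      have hfv : ↑χ₁.freeVarFinset ⊆ (↑χ₁.freeVarFinset : Set M) := subset_rfl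
      set χ₂ := χ₁.restrictFreeVar (Set.inclusion hfv) with hχ₂
      haveI : Finite ((↑χ₁.freeVarFinset : Set M) : Type _) :=
        (χ₁.freeVarFinset.finite_toSet).to_subtype
      set ψ : L₀.Sentence :=
        Formula.iExs ((↑χ₁.freeVarFinset : Set M) : Type _) (Formula.relabel (Sum.inr : _ → Empty ⊕ ((↑χ₁.freeVarFinset : Set M) : Type _)) χ₂) with hψdef
      -- `M ⊨ ψ`
      have hMχ : (BoundedFormula.iInf (fun θ : D => θ.1)).Realize
          (default : Empty → M) (default : Fin 0 → M) := by
        rw [BoundedFormula.realize_iInf]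
        intro b
        exact hD b.2
      have hMχ₁ : χ₁.Realize (fun a => (L₀.con a : M)) :=
        (Formula.realize_equivSentence_symm_con M (BoundedFormula.iInf (fun θ : D => θ.1))).2 hMχ
      have hconM : (fun a => (L₀.con a : M)) = fun a : M => a := rfl
      rw [hconM] at hMχ₁
      have hMχ₂ : χ₂.Realize ((fun a : M => a) ∘ (fun a : (↑χ₁.freeVarFinset : Set M) => (a : M)))
          (default : Fin 0 → M) :=
        (BoundedFormula.realize_restrictFreeVar' hfv).2 hMχ₁
      have hMψ : M ⊨ ψ := by
        refine Formula.realize_iExs.2 ⟨fun a => (a : M), ?_⟩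
        exact Formula.realize_relabel.2 hMχ₂
      -- `{φ} ⊨ᵇ ι.onSentence ψ.not`
      have hφψ : ({φ} : L.Theory) ⊨ᵇ ι.onSentence ψ.not := by
        rw [Theory.models_sentence_iff]
        intro A
        letI S0A : L₀.Structure A := ι.reduct A
        rw [LHom.realize_onSentence, Sentence.realize_not]
        intro hAψ
        obtain ⟨i, hi⟩ := Formula.realize_iExs.1 hAψ
        set g : M → A := fun m =>
          if hm : m ∈ (↑χ₁.freeVarFinset : Set M) then i ⟨m, hm⟩ else Classical.arbitrary A
          with hgdef
        have hAχ₂ : χ₂.Realize (g ∘ (fun a : (↑χ₁.freeVarFinset : Set M) => (a : M)))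
            (default : Fin 0 → A) := by
          have hcomp : (g ∘ (fun a : (↑χ₁.freeVarFinset : Set M) => (a : M)))
              = fun a => Sum.elim (default : Empty → A) i (Sum.inr a) := by
            funext a
            have ha : (a : M) ∈ (↑χ₁.freeVarFinset : Set M) := a.2
            simp only [Function.comp_apply, hgdef, dif_pos ha, Sum.elim_inr]
          rw [hcomp]
          exact Formula.realize_relabel.1 hi
        have hAχ₁ : χ₁.Realize g :=
          (BoundedFormula.realize_restrictFreeVar' hfv).1 hAχ₂
        letI : (constantsOn M).Structure A := constantsOn.structure g
        have hconA : (fun a => (L₀.con a : A)) = g := rfl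
        rw [← hconA] at hAχ₁
        have hAχ : (BoundedFormula.iInf (fun θ : D => θ.1)).Realize
            (default : Empty → A) (default : Fin 0 → A) :=
          (Formula.realize_equivSentence_symm_con A (BoundedFormula.iInf (fun θ : D => θ.1))).1 hAχ₁
        haveI : A ⊨ (↑T₀ : (L.withConstants M).Theory) := by
          constructor
          intro s hs
          by_cases hsφ : s = φ'
          · rw [hsφ, hφ']
            exact (LHom.realize_onSentence (M := A) (L.lhomWithConstants M) φ).2
              (A.is_model.realize_of_mem φ rfl)
          · have hs' : s ∈ (T₀.erase φ' : Finset _) := Finset.mem_erase.2 ⟨hsφ, hs⟩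
            rw [← hDimg] at hs'
            obtain ⟨θ, hθD, rfl⟩ := Finset.mem_image.1 hs'
            refine (LHom.realize_onSentence (M := A) (ι.addConstants M) θ).2 ?_
            exact (BoundedFormula.realize_iInf (v := default) (v' := default)).1 hAχ ⟨θ, hθD⟩
        exact hT₀ (Theory.Model.isSatisfiable A)
      have hcon := (h ψ.not hφψ).realize_sentence M
      rw [Sentence.realize_not] at hcon
      exact hcon hMψ
    -- Build the elementary extension from a model of `T`
    obtain ⟨N⟩ := hsat
    letI S₀C : (L₀.withConstants M).Structure N := (ι.addConstants M).reduct N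
    letI S₀ : L₀.Structure N := (L₀.lhomWithConstants M).reduct N
    letI SL : L.Structure N := (L.lhomWithConstants M).reduct N
    haveI e1 : @LHom.IsExpansionOn _ _ (ι.addConstants M) N S₀C _ :=
      LHom.isExpansionOn_reduct _ _
    haveI e2 : @LHom.IsExpansionOn _ _ (L₀.lhomWithConstants M) N S₀ S₀C :=
      LHom.isExpansionOn_reduct _ _
    haveI e3 : @LHom.IsExpansionOn _ _ (L.lhomWithConstants M) N SL _ :=
      LHom.isExpansionOn_reduct _ _
    refine ⟨N, S₀, SL, ?_, ?_, ?_⟩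
    · haveI hm1 : N ⊨ (ι.addConstants M).onTheory (L₀.elementaryDiagram M) :=
        N.is_model.mono Set.subset_union_left
      haveI : N ⊨ L₀.elementaryDiagram M :=
        (LHom.onTheory_model (M := N) (ι.addConstants M) (L₀.elementaryDiagram M)).1 hm1
      exact ⟨ElementaryEmbedding.ofModelsElementaryDiagram L₀ M N⟩
    · exact ⟨fun _f _x => rfl, fun _r _x => rfl⟩
    · have hφ'real : N ⊨ φ' :=
        N.is_model.realize_of_mem φ' (Set.mem_union_right _ rfl)
      exact (LHom.realize_onSentence (M := N) (L.lhomWithConstants M) φ).1 hφ'real
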